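/- Let m > 0 and s ≠ 0. Then the iterated Lebesgue integral ∫_{-∞}^{∞} ( ∫_{-∞}^{∞} cos(p y) · e^{-|s|√(m²+p²)} / (2√(m²+p²)) dp ) dy is well defined (the inner integral is absolutely convergent for every y, and the resulting function of y is absolutely integrable) and equals (π/m) · e^{-m|s|}. -/

import Mathlib

open MeasureTheory Filter Real Set
open scoped FourierTransform RealInnerProductSpace

lemma integrable_exp_neg_abs' {b : ℝ} (hb : 0 < b) :
    Integrable (fun x : ℝ => exp (-(b * |x|))) := by
  have A : MeasurableEmbedding (fun x : ℝ => -x) :=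
    (Homeomorph.neg ℝ).isClosedEmbedding.measurableEmbedding
  have h1 : IntegrableOn (fun x : ℝ => exp (-(b * |x|))) (Ici 0) := by
    rw [integrableOn_Ici_iff_integrableOn_Ioi]
    exact (exp_neg_integrableOn_Ioi 0 hb).congr_fun
      (fun x hx => by simp only; rw [abs_of_pos hx, neg_mul]) measurableSet_Ioi
  have h2 : IntegrableOn (fun x : ℝ => exp (-(b * |x|))) (Iic 0) := by
    have hmap := A.restrict_map (μ := (volume : Measure ℝ)) (s := Iic (0:ℝ))
    rw [Measure.map_neg_eq_self] at hmap
    rw [IntegrableOn, hmap, A.integrable_map_iff]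
    have : ((fun x : ℝ => exp (-(b * |x|))) ∘ fun x : ℝ => -x)
        = fun x : ℝ => exp (-(b * |x|)) := by
      funext x; simp [Function.comp]
    rw [this]
    have hpre : ((fun x : ℝ => -x) ⁻¹' Iic 0) = Ici 0 := by
      ext x; simp
    rw [hpre]; exact h1
  have := h2.union h1
  rwa [Iic_union_Ici, integrableOn_univ] at this

noncomputable def KLom (m p : ℝ) : ℝ := Real.sqrt (m^2 + p^2)
noncomputable def KLg (m a p : ℝ) : ℝ := Real.exp (-(a * KLom m p)) / (2 * KLom m p)
noncomputable def KLg1 (m a p : ℝ) : ℝ :=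
  -(p * Real.exp (-(a * KLom m p)) * (a * KLom m p + 1)) / (2 * (KLom m p)^3)
noncomputable def KLg2 (m a p : ℝ) : ℝ :=
  Real.exp (-(a * KLom m p)) *
    (a^2*p^2*(KLom m p)^2 + 3*p^2*(a*KLom m p+1) - (a*KLom m p+1)*(KLom m p)^2)
    / (2*(KLom m p)^5)

variable {m a : ℝ}

lemma KLom_pos (hm : 0 < m) (p : ℝ) : 0 < KLom m p :=
  Real.sqrt_pos.2 (by positivity)

lemma KLom_ge_m (hm : 0 < m) (p : ℝ) : m ≤ KLom m p := by
  rw [KLom, show m^2 + p^2 = m^2 + p^2 from rfl]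
  calc m = Real.sqrt (m^2) := by rw [Real.sqrt_sq hm.le]
  _ ≤ _ := Real.sqrt_le_sqrt (by nlinarith)

lemma KLom_ge_abs (p : ℝ) : |p| ≤ KLom m p := by
  rw [KLom]
  calc |p| = Real.sqrt (p^2) := (Real.sqrt_sq_eq_abs p).symm
  _ ≤ _ := Real.sqrt_le_sqrt (by nlinarith)

lemma hasDerivAt_KLom (hm : 0 < m) (p : ℝ) :
    HasDerivAt (KLom m) (p / KLom m p) p := by
  have h0 : (0:ℝ) < m^2 + p^2 := by positivity
  have h1 : HasDerivAt (fun q : ℝ => m^2 + q^2) (2*p) p := by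
    simpa using ((hasDerivAt_pow 2 p).const_add (m^2))
  have h2 := (Real.hasDerivAt_sqrt (ne_of_gt h0)).comp p h1
  have hw : KLom m p ≠ 0 := (KLom_pos hm p).ne'
  refine h2.congr_deriv ?_
  unfold KLom at hw ⊢
  field_simp




lemma hasDerivAt_KLexp (hm : 0 < m) (p : ℝ) :
    HasDerivAt (fun q => Real.exp (-(a * KLom m q)))
      (Real.exp (-(a * KLom m p)) * (-(a * (p / KLom m p)))) p :=
  (((hasDerivAt_KLom hm p).const_mul a).neg).exp

lemma hasDerivAt_KLg (hm : 0 < m) (p : ℝ) :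
    HasDerivAt (KLg m a) (KLg1 m a p) p := by
  have hw : (0:ℝ) < KLom m p := KLom_pos hm p
  have hD : HasDerivAt (fun q => 2 * KLom m q) (2 * (p / KLom m p)) p :=
    (hasDerivAt_KLom hm p).const_mul 2
  have h := (hasDerivAt_KLexp (a := a) hm p).div hD (by positivity)
  refine h.congr_deriv ?_
  unfold KLg1
  field_simp
  ring

lemma hasDerivAt_KLg1 (hm : 0 < m) (p : ℝ) :
    HasDerivAt (KLg1 m a) (KLg2 m a p) p := by
  have hw : (0:ℝ) < KLom m p := KLom_pos hm p
  have hN : HasDerivAt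
      (fun q => q * Real.exp (-(a * KLom m q)) * (a * KLom m q + 1))
      ((1 * Real.exp (-(a * KLom m p)) +
        p * (Real.exp (-(a * KLom m p)) * (-(a * (p / KLom m p)))))
        * (a * KLom m p + 1)
       + p * Real.exp (-(a * KLom m p)) * (a * (p / KLom m p))) p :=
    ((hasDerivAt_id p).mul (hasDerivAt_KLexp hm p)).mul
      (((hasDerivAt_KLom hm p).const_mul a).add_const 1)
  have hD := ((hasDerivAt_KLom hm p).pow 3).const_mul 2
  have h := hN.neg.div hD (mul_ne_zero two_ne_zero (pow_ne_zero 3 hw.ne'))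
  refine h.congr_deriv ?_
  simp only [Pi.pow_apply, Pi.neg_apply]
  unfold KLg2
  field_simp
  ring




lemma KLom_continuous : Continuous (KLom m) :=
  Real.continuous_sqrt.comp (by continuity)

lemma KLexp_continuous : Continuous (fun p => Real.exp (-(a * KLom m p))) :=
  Real.continuous_exp.comp (((continuous_const.mul KLom_continuous : Continuous fun p => a * KLom _ p)).neg)

lemma KLexp_le (ha : 0 ≤ a) (p : ℝ) :
    Real.exp (-(a * KLom m p)) ≤ Real.exp (-(a * |p|)) := by
  apply Real.exp_le_exp.2
  have := KLom_ge_abs (m := m) p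
  nlinarith

lemma KLg_continuous (hm : 0 < m) : Continuous (KLg m a) :=
  KLexp_continuous.div ((continuous_const.mul KLom_continuous : Continuous fun p => 2 * KLom _ p))
    (fun p => by have := KLom_pos hm p; positivity)

lemma KLg1_continuous (hm : 0 < m) : Continuous (KLg1 m a) :=
  (((continuous_id.mul KLexp_continuous).mul
    (((continuous_const.mul KLom_continuous : Continuous fun p => a * KLom _ p)).add continuous_const)).neg).div
    ((continuous_const.mul (KLom_continuous.pow 3) : Continuous fun p => 2 * (KLom _ p)^3))
    (fun p => by have := KLom_pos hm p; positivity)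

lemma KLg2_continuous (hm : 0 < m) : Continuous (KLg2 m a) := by
  apply Continuous.div
  · exact KLexp_continuous.mul (by
      apply Continuous.sub
      · apply Continuous.add
        · exact ((continuous_const.mul (continuous_pow 2)).mul (KLom_continuous.pow 2))
        · exact (continuous_const.mul (continuous_pow 2)).mul
            (((continuous_const.mul KLom_continuous : Continuous fun p => a * KLom _ p)).add continuous_const)
      · exact (((continuous_const.mul KLom_continuous : Continuous fun p => a * KLom _ p)).add continuous_const).mul (KLom_continuous.pow 2))
  · exact (continuous_const.mul (KLom_continuous.pow 5) : Continuous fun p => 2 * (KLom _ p)^5)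
  · exact fun p => by have := KLom_pos hm p; positivity

lemma KLg_bound (hm : 0 < m) (ha : 0 < a) (p : ℝ) :
    ‖KLg m a p‖ ≤ (1/(2*m)) * Real.exp (-(a * |p|)) := by
  have hw := KLom_pos hm p
  have hwm := KLom_ge_m hm p
  have hE : (0:ℝ) < Real.exp (-(a * KLom m p)) := Real.exp_pos _
  rw [Real.norm_eq_abs, KLg, abs_of_pos (by positivity)]
  calc Real.exp (-(a * KLom m p)) / (2 * KLom m p)
      ≤ Real.exp (-(a * |p|)) / (2 * m) := by
        gcongr <;> first
          | exact KLom_ge_abs p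
          | exact KLom_ge_m hm p
          | positivity
  _ = (1/(2*m)) * Real.exp (-(a * |p|)) := by ring

lemma KLg_integrable (hm : 0 < m) (ha : 0 < a) : Integrable (KLg m a) := by
  apply Integrable.mono' ((integrable_exp_neg_abs' ha).const_mul (1/(2*m)))
    (KLg_continuous hm).aestronglyMeasurable
  exact ae_of_all _ (KLg_bound hm ha)

lemma KLg1_bound (hm : 0 < m) (ha : 0 < a) (p : ℝ) :
    ‖KLg1 m a p‖ ≤ (a/(2*m) + 1/(2*m^2)) * Real.exp (-(a * |p|)) := by
  have hw := KLom_pos hm p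
  have hwm := KLom_ge_m hm p
  have hwp := KLom_ge_abs (m := m) p
  have hE : (0:ℝ) < Real.exp (-(a * KLom m p)) := Real.exp_pos _
  have habs : ‖KLg1 m a p‖ =
      |p| * Real.exp (-(a * KLom m p)) * (a * KLom m p + 1) / (2 * (KLom m p)^3) := by
    rw [Real.norm_eq_abs, KLg1, abs_div, abs_neg, abs_of_pos (by positivity : (0:ℝ) < 2 * (KLom m p)^3)]
    rw [abs_mul, abs_mul, abs_of_pos hE, abs_of_pos (by positivity : (0:ℝ) < a * KLom m p + 1)]
  rw [habs]
  calc |p| * Real.exp (-(a * KLom m p)) * (a * KLom m p + 1) / (2 * (KLom m p)^3)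
      ≤ KLom m p * Real.exp (-(a * KLom m p)) * (a * KLom m p + 1) / (2 * (KLom m p)^3) := by
        gcongr
  _ = Real.exp (-(a * KLom m p)) * (a/(2*KLom m p) + 1/(2*(KLom m p)^2)) := by
        field_simp
  _ ≤ Real.exp (-(a * |p|)) * (a/(2*m) + 1/(2*m^2)) := by
        gcongr <;> first
          | exact KLom_ge_abs p
          | exact KLom_ge_m hm p
          | positivity
  _ = (a/(2*m) + 1/(2*m^2)) * Real.exp (-(a * |p|)) := by ring

lemma KLg1_integrable (hm : 0 < m) (ha : 0 < a) : Integrable (KLg1 m a) := by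
  apply Integrable.mono' ((integrable_exp_neg_abs' ha).const_mul (a/(2*m) + 1/(2*m^2)))
    (KLg1_continuous hm).aestronglyMeasurable
  exact ae_of_all _ (KLg1_bound hm ha)

lemma KLg2_bound (hm : 0 < m) (ha : 0 < a) (p : ℝ) :
    ‖KLg2 m a p‖ ≤ (a^2/(2*m) + 2*a/m^2 + 2/m^3) * Real.exp (-(a * |p|)) := by
  have hw := KLom_pos hm p
  have hwm := KLom_ge_m hm p
  have hwp := KLom_ge_abs (m := m) p
  have hp2 : p^2 ≤ (KLom m p)^2 := by nlinarith [abs_nonneg p, sq_abs p]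
  have hE : (0:ℝ) < Real.exp (-(a * KLom m p)) := Real.exp_pos _
  have h1 : ‖KLg2 m a p‖ ≤ Real.exp (-(a * KLom m p)) *
      (a^2*p^2*(KLom m p)^2 + 3*p^2*(a*KLom m p+1) + (a*KLom m p+1)*(KLom m p)^2)
      / (2*(KLom m p)^5) := by
    rw [Real.norm_eq_abs, KLg2, abs_div,
      abs_of_pos (by positivity : (0:ℝ) < 2*(KLom m p)^5), abs_mul, abs_of_pos hE]
    gcongr
    calc |a^2*p^2*(KLom m p)^2 + 3*p^2*(a*KLom m p+1) - (a*KLom m p+1)*(KLom m p)^2|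
        ≤ |a^2*p^2*(KLom m p)^2 + 3*p^2*(a*KLom m p+1)| + |(a*KLom m p+1)*(KLom m p)^2| :=
          abs_sub _ _
    _ ≤ a^2*p^2*(KLom m p)^2 + 3*p^2*(a*KLom m p+1) + (a*KLom m p+1)*(KLom m p)^2 := by
          rw [abs_of_nonneg (by positivity), abs_of_nonneg (by positivity)]
  refine h1.trans ?_
  calc Real.exp (-(a * KLom m p)) *
      (a^2*p^2*(KLom m p)^2 + 3*p^2*(a*KLom m p+1) + (a*KLom m p+1)*(KLom m p)^2)
      / (2*(KLom m p)^5)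
      ≤ Real.exp (-(a * KLom m p)) *
      (a^2*(KLom m p)^2*(KLom m p)^2 + 3*(KLom m p)^2*(a*KLom m p+1)
        + (a*KLom m p+1)*(KLom m p)^2) / (2*(KLom m p)^5) := by
        gcongr
  _ = Real.exp (-(a * KLom m p)) *
      (a^2/(2*KLom m p) + 2*a/(KLom m p)^2 + 2/(KLom m p)^3) := by
        field_simp; ring
  _ ≤ Real.exp (-(a * |p|)) * (a^2/(2*m) + 2*a/m^2 + 2/m^3) := by
        gcongr <;> first
          | exact KLom_ge_abs p
          | exact KLom_ge_m hm p
          | positivity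
  _ = (a^2/(2*m) + 2*a/m^2 + 2/m^3) * Real.exp (-(a * |p|)) := by ring

lemma KLg2_integrable (hm : 0 < m) (ha : 0 < a) : Integrable (KLg2 m a) := by
  apply Integrable.mono' ((integrable_exp_neg_abs' ha).const_mul (a^2/(2*m) + 2*a/m^2 + 2/m^3))
    (KLg2_continuous hm).aestronglyMeasurable
  exact ae_of_all _ (KLg2_bound hm ha)




theorem KL_fourier_integrable (hm : 0 < m) (ha : 0 < a) :
    Integrable (𝓕 (fun p : ℝ => (KLg m a p : ℂ))) := by
  set F : ℝ → ℂ := fun p => (KLg m a p : ℂ) with hF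
  have hFint : Integrable F := (KLg_integrable hm ha).ofReal
  have hFd : ∀ p, HasDerivAt F (KLg1 m a p : ℂ) p := fun p => (hasDerivAt_KLg hm p).ofReal_comp
  have hderiv : deriv F = fun p => (KLg1 m a p : ℂ) := funext fun p => (hFd p).deriv
  have hF1int : Integrable (deriv F) := by
    rw [hderiv]; exact (KLg1_integrable hm ha).ofReal
  have e1 : 𝓕 (deriv F) = fun x : ℝ => (2 * ↑π * Complex.I * ↑x) • (𝓕 F x) :=
    Real.fourier_deriv hFint (fun p => (hFd p).differentiableAt) hF1int
  have hFd1 : ∀ p : ℝ, HasDerivAt (fun q => ((KLg1 m a q : ℝ) : ℂ)) (KLg2 m a p : ℂ) p :=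
    fun p => (hasDerivAt_KLg1 hm p).ofReal_comp
  have hderiv2 : deriv (deriv F) = fun p => (KLg2 m a p : ℂ) := by
    rw [hderiv]; exact funext fun p => (hFd1 p).deriv
  have hF2int : Integrable (deriv (deriv F)) := by
    rw [hderiv2]; exact (KLg2_integrable hm ha).ofReal
  have e2 : 𝓕 (deriv (deriv F)) = fun x : ℝ => (2 * ↑π * Complex.I * ↑x) • (𝓕 (deriv F) x) :=
    Real.fourier_deriv hF1int
      (by rw [hderiv]; exact fun p => (hFd1 p).differentiableAt) hF2int
  set M0 : ℝ := ∫ p : ℝ, ‖F p‖ with hM0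
  set M2 : ℝ := ∫ p : ℝ, ‖deriv (deriv F) p‖ with hM2
  have hM0nn : 0 ≤ M0 := integral_nonneg fun p => norm_nonneg _
  have hM2nn : 0 ≤ M2 := integral_nonneg fun p => norm_nonneg _
  set C : ℝ := max (2 * M0) (M2 / (2 * π^2)) with hC
  have hCnn : 0 ≤ C := le_trans (by positivity) (le_max_left _ _)
  have hnorm0 : ∀ w : ℝ, ‖𝓕 F w‖ ≤ M0 := fun w =>
    VectorFourier.norm_fourierIntegral_le_integral_norm 𝐞 volume (innerₗ ℝ) F w
  have hnorm2 : ∀ w : ℝ, ‖𝓕 (deriv (deriv F)) w‖ ≤ M2 := fun w =>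
    VectorFourier.norm_fourierIntegral_le_integral_norm 𝐞 volume (innerₗ ℝ) _ w
  have bound : ∀ x : ℝ, ‖𝓕 F x‖ ≤ C * (1 + x^2)⁻¹ := by
    intro x
    have h1x : (0:ℝ) < 1 + x^2 := by positivity
    rcases le_or_gt (x^2) 1 with h | h
    · have : ‖𝓕 F x‖ ≤ M0 := hnorm0 x
      have h2 : 1 + x^2 ≤ 2 := by linarith
      calc ‖𝓕 F x‖ ≤ M0 := this
      _ ≤ C / 2 := by
          rw [le_div_iff₀ (by norm_num : (0:ℝ) < 2)]
          calc M0 * 2 = 2 * M0 := by ring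
          _ ≤ C := le_max_left _ _
      _ ≤ C * (1 + x^2)⁻¹ := by
          rw [div_eq_mul_inv]
          apply mul_le_mul_of_nonneg_left _ hCnn
          exact inv_anti₀ h1x h2
    · have hx : x ≠ 0 := by rintro rfl; norm_num at h
      have key : ‖𝓕 (deriv (deriv F)) x‖ = (2*π*|x|)^2 * ‖𝓕 F x‖ := by
        rw [e2, e1]
        rw [norm_smul, norm_smul]
        have : ‖(2 * (π:ℂ) * Complex.I * (x:ℂ))‖ = 2*π*|x| := by
          simp [norm_mul, Complex.norm_real, Real.norm_eq_abs, abs_of_pos Real.pi_pos]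
        rw [this]; ring
      have h4 : (2*π*|x|)^2 * ‖𝓕 F x‖ ≤ M2 := key ▸ hnorm2 x
      have hxabs : (0:ℝ) < |x| := abs_pos.2 hx
      have h5 : ‖𝓕 F x‖ ≤ M2 / (4*π^2*x^2) := by
        rw [le_div_iff₀ (by positivity)]
        calc ‖𝓕 F x‖ * (4*π^2*x^2) = (2*π*|x|)^2 * ‖𝓕 F x‖ := by
              rw [mul_pow, mul_pow, _root_.sq_abs]; ring
        _ ≤ M2 := h4
      have h6 : 1 + x^2 ≤ 2 * x^2 := by nlinarith
      calc ‖𝓕 F x‖ ≤ M2 / (4*π^2*x^2) := h5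
      _ ≤ C * (1 + x^2)⁻¹ := by
          have hC2 : M2 ≤ C * (2*π^2) := by
            have h8 := le_max_right (2 * M0) (M2 / (2 * π^2))
            rw [div_le_iff₀ (by positivity : (0:ℝ) < 2*π^2)] at h8
            exact h8
          rw [← div_eq_mul_inv, div_le_div_iff₀ (by positivity) h1x]
          nlinarith [hCnn, hM2nn, Real.pi_pos, sq_nonneg x, sq_nonneg (π*x)]
  exact (integrable_inv_one_add_sq.const_mul C).mono'
    ((VectorFourier.fourierIntegral_continuous Real.continuous_fourierChar
      continuous_inner hFint).aestronglyMeasurable)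
    (ae_of_all _ bound)




theorem KL_main (hm : 0 < m) (ha : 0 < a) :
    (∀ y : ℝ, Integrable (fun p : ℝ => Real.cos (p * y) * KLg m a p)) ∧
    Integrable (fun y : ℝ => ∫ p : ℝ, Real.cos (p * y) * KLg m a p) ∧
    (∫ y : ℝ, ∫ p : ℝ, Real.cos (p * y) * KLg m a p) = π / m * Real.exp (-(a * m)) := by
  set F : ℝ → ℂ := fun p => (KLg m a p : ℂ) with hFdef
  have hFint : Integrable F := (KLg_integrable hm ha).ofReal
  have hFcont : Continuous F := Complex.continuous_ofReal.comp (KLg_continuous hm)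
  have hFT_int : Integrable (𝓕 F) := KL_fourier_integrable hm ha
  have h2pi : (2 * π : ℝ) ≠ 0 := by positivity
  have key : ∀ y : ℝ, (∫ p : ℝ, Real.cos (p * y) * KLg m a p) = (𝓕 F (y / (2*π))).re := by
    intro y
    have hint : Integrable (fun p : ℝ => 𝐞 (-⟪p, y/(2*π)⟫) • F p) :=
      (Real.fourierIntegral_convergent_iff _).2 hFint
    have hpt : ∀ p : ℝ, (𝐞 (-⟪p, y/(2*π)⟫) • F p).re = Real.cos (p * y) * KLg m a p := by
      intro p
      have hip : (⟪p, y/(2*π)⟫ : ℝ) = p * (y/(2*π)) := Real.inner_apply _ _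
      simp only [hFdef, Circle.smul_def, Real.fourierChar_apply, hip]
      rw [show (2 * π * -(p * (y/(2*π))) : ℝ) = -(p*y) by field_simp]
      rw [smul_eq_mul, Complex.mul_re, Complex.ofReal_re, Complex.ofReal_im, mul_zero, sub_zero,
        Complex.exp_ofReal_mul_I_re, Real.cos_neg]
    have hre := integral_re hint
    simp only [RCLike.re_to_complex] at hre
    rw [Real.fourier_eq, ← hre]
    exact integral_congr_ae (ae_of_all _ fun p => (hpt p).symm)
  have hcomp : Integrable (fun y : ℝ => 𝓕 F (y / (2*π))) := hFT_int.comp_div h2pi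
  refine ⟨?_, ?_, ?_⟩
  · intro y
    apply (KLg_integrable hm ha).bdd_mul (c := 1)
    · exact (Real.continuous_cos.comp (continuous_mul_right y)).aestronglyMeasurable
    · exact ae_of_all _ fun p => by rw [Real.norm_eq_abs]; exact Real.abs_cos_le_one _
  · exact (hcomp.re).congr (ae_of_all _ fun y => (key y).symm)
  · have hinv0 : (∫ w : ℝ, 𝓕 F w) = 𝓕⁻ (𝓕 F) 0 := by
      rw [Real.fourierInv_eq]
      simp
    have hinv : 𝓕⁻ (𝓕 F) 0 = F 0 := hFint.fourierInv_fourier_eq hFT_int hFcont.continuousAt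
    have hF0 : F 0 = ((Real.exp (-(a*m)) / (2*m) : ℝ) : ℂ) := by
      rw [hFdef]
      norm_num [KLg, KLom, Real.sqrt_sq hm.le]
    calc (∫ y : ℝ, ∫ p : ℝ, Real.cos (p * y) * KLg m a p)
        = ∫ y : ℝ, (𝓕 F (y / (2*π))).re := by
          exact integral_congr_ae (ae_of_all _ fun y => key y)
    _ = (∫ y : ℝ, 𝓕 F (y / (2*π))).re := by
          have hre := integral_re hcomp
          simp only [RCLike.re_to_complex] at hre
          exact hre
    _ = ((|2*π| : ℝ) • (∫ w : ℝ, 𝓕 F w)).re := by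
          rw [MeasureTheory.Measure.integral_comp_div (𝓕 F) (2*π)]
    _ = (2*π) * (Real.exp (-(a*m)) / (2*m)) := by
          rw [hinv0, hinv, hF0, Complex.real_smul, ← Complex.ofReal_mul, Complex.ofReal_re,
            abs_of_pos (by positivity : (0:ℝ) < 2*π)]
    _ = π / m * Real.exp (-(a*m)) := by field_simp

/-- Single-mass Källén–Lehmann computation: for `m > 0` and `s ≠ 0`, the inner integral
`∫ cos(py) e^{-|s|√(m²+p²)} / (2√(m²+p²)) dp` is absolutely convergent for every `y`,
the resulting function of `y` is absolutely integrable, and the iterated integral equals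
`(π/m) e^{-m|s|}`. -/
theorem stmt18 (m s : ℝ) (hm : 0 < m) (hs : s ≠ 0) :
    (∀ y : ℝ, Integrable (fun p : ℝ =>
        cos (p * y) * exp (-|s| * sqrt (m ^ 2 + p ^ 2)) / (2 * sqrt (m ^ 2 + p ^ 2)))) ∧
    Integrable (fun y : ℝ => ∫ p : ℝ,
        cos (p * y) * exp (-|s| * sqrt (m ^ 2 + p ^ 2)) / (2 * sqrt (m ^ 2 + p ^ 2))) ∧
    (∫ y : ℝ, ∫ p : ℝ,
        cos (p * y) * exp (-|s| * sqrt (m ^ 2 + p ^ 2)) / (2 * sqrt (m ^ 2 + p ^ 2)))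
      = π / m * exp (-m * |s|) := by
  have ha : 0 < |s| := abs_pos.2 hs
  obtain ⟨h1, h2, h3⟩ := KL_main hm ha
  have hfun : ∀ y : ℝ, (fun p : ℝ =>
      cos (p * y) * exp (-|s| * sqrt (m ^ 2 + p ^ 2)) / (2 * sqrt (m ^ 2 + p ^ 2)))
      = fun p : ℝ => cos (p * y) * KLg m |s| p := by
    intro y; funext p
    rw [KLg, KLom, mul_div_assoc, neg_mul]
  refine ⟨fun y => by rw [hfun y]; exact h1 y, ?_, ?_⟩
  · have heq : (fun y : ℝ => ∫ p : ℝ,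
        cos (p * y) * exp (-|s| * sqrt (m ^ 2 + p ^ 2)) / (2 * sqrt (m ^ 2 + p ^ 2)))
        = fun y : ℝ => ∫ p : ℝ, cos (p * y) * KLg m |s| p := funext fun y => by rw [hfun y]
    rw [heq]; exact h2
  · have heq : ∀ y : ℝ, (∫ p : ℝ,
        cos (p * y) * exp (-|s| * sqrt (m ^ 2 + p ^ 2)) / (2 * sqrt (m ^ 2 + p ^ 2)))
        = ∫ p : ℝ, cos (p * y) * KLg m |s| p := fun y => by rw [hfun y]
    calc (∫ y : ℝ, ∫ p : ℝ,
        cos (p * y) * exp (-|s| * sqrt (m ^ 2 + p ^ 2)) / (2 * sqrt (m ^ 2 + p ^ 2)))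
        = ∫ y : ℝ, ∫ p : ℝ, cos (p * y) * KLg m |s| p :=
          integral_congr_ae (ae_of_all _ fun y => heq y)
    _ = π / m * exp (-(|s| * m)) := h3
    _ = π / m * exp (-m * |s|) := by rw [show -m * |s| = -(|s| * m) by ring]
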